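/- Let U and Y be n×r real matrices such that Uᵀ·Y = Yᵀ·U and Uᵀ·Y is positive semidefinite. Then ‖(U − Y)·Uᵀ‖_F² ≤ (1/(2(√2 − 1)))·‖U·Uᵀ − Y·Yᵀ‖_F². -/

import Mathlib

open Matrix MeasureTheory BigOperators

/-- Matrix inner product `⟨A, X⟩ = trace(Aᵀ X)`. -/
noncomputable def mip {n : ℕ} (A X : Matrix (Fin n) (Fin n) ℝ) : ℝ :=
  (Aᵀ * X).trace

/-- Frobenius norm of a real matrix. -/
noncomputable def frob {n₁ n₂ : ℕ} (M : Matrix (Fin n₁) (Fin n₂) ℝ) : ℝ :=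
  Real.sqrt (∑ i, ∑ j, (M i j) ^ 2)

/-- `(k, δ)`-restricted isometry property of the measurement operator `A`. -/
def RIP {n m : ℕ} (A : Fin m → Matrix (Fin n) (Fin n) ℝ) (k : ℕ) (δ : ℝ) : Prop :=
  ∀ X : Matrix (Fin n) (Fin n) ℝ, X.rank ≤ k →
    (1 - δ) * frob X ^ 2 ≤ (1 / (m : ℝ)) * ∑ i, mip (A i) X ^ 2 ∧
    (1 / (m : ℝ)) * ∑ i, mip (A i) X ^ 2 ≤ (1 + δ) * frob X ^ 2

/-- Objective `f(U) = ∑ i, (⟨A i, U Uᵀ⟩ - y i)²`. -/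
noncomputable def fobj {n m r : ℕ} (A : Fin m → Matrix (Fin n) (Fin n) ℝ) (y : Fin m → ℝ)
    (U : Matrix (Fin n) (Fin r) ℝ) : ℝ :=
  ∑ i, (mip (A i) (U * Uᵀ) - y i) ^ 2

lemma frob_sq_eq {n₁ n₂ : ℕ} (X : Matrix (Fin n₁) (Fin n₂) ℝ) :
    frob X ^ 2 = (Xᵀ * X).trace := by
  rw [frob, Real.sq_sqrt (by positivity)]
  rw [Matrix.trace, Finset.sum_comm]
  simp [Matrix.mul_apply, Matrix.diag, sq]

lemma trace_tr_mul_self_nonneg {n₁ n₂ : ℕ} (X : Matrix (Fin n₁) (Fin n₂) ℝ) :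
    0 ≤ (Xᵀ * X).trace := by
  rw [← frob_sq_eq]; positivity

lemma psd_trace_nonneg {k : ℕ} {Q : Matrix (Fin k) (Fin k) ℝ} (hQ : Q.PosSemidef) :
    0 ≤ Q.trace := by
  rw [Matrix.trace]
  refine Finset.sum_nonneg fun i _ => ?_
  have := hQ.dotProduct_mulVec_nonneg (Pi.single i 1)
  simpa [dotProduct, Matrix.mulVec, Pi.single_apply, Finset.sum_ite_eq,
    Matrix.diag] using this

/-- cyclic shift by one for a 4-fold product grouped in pairs -/
lemma tcyc {a b c d : Type*} [Fintype a] [Fintype b] [Fintype c] [Fintype d]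
    (A : Matrix a b ℝ) (B : Matrix b c ℝ) (C : Matrix c d ℝ) (E : Matrix d a ℝ) :
    ((A * B) * (C * E)).trace = ((B * C) * (E * A)).trace := by
  rw [show (A * B) * (C * E) = A * (B * (C * E)) by simp only [Matrix.mul_assoc],
    Matrix.trace_mul_comm]
  simp only [Matrix.mul_assoc]

/-- Cauchy-Schwarz for traces of symmetric r×r matrices -/
lemma trace_cs {r : ℕ} (K S : Matrix (Fin r) (Fin r) ℝ) (hK : Kᵀ = K) :
    ((K * S).trace) ^ 2 ≤ (Kᵀ * K).trace * (Sᵀ * S).trace := by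
  have hKe : ∀ i j, K j i = K i j := fun i j => congrFun (congrFun hK i) j
  have h1 : (K * S).trace = ∑ p : Fin r × Fin r, K p.1 p.2 * S p.1 p.2 := by
    rw [Matrix.trace, Fintype.sum_prod_type]
    simp only [Matrix.diag, Matrix.mul_apply]
    rw [Finset.sum_comm]
    exact Finset.sum_congr rfl fun k _ => Finset.sum_congr rfl fun x _ => by rw [hKe x k]
  have h2 : (Kᵀ * K).trace = ∑ p : Fin r × Fin r, K p.1 p.2 ^ 2 := by
    rw [Matrix.trace, Fintype.sum_prod_type]
    simp only [Matrix.diag, Matrix.mul_apply, Matrix.transpose_apply, sq]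
    rw [Finset.sum_comm]
  have h3 : (Sᵀ * S).trace = ∑ p : Fin r × Fin r, S p.1 p.2 ^ 2 := by
    rw [Matrix.trace, Fintype.sum_prod_type]
    simp only [Matrix.diag, Matrix.mul_apply, Matrix.transpose_apply, sq]
    rw [Finset.sum_comm]
  rw [h1, h2, h3]
  exact Finset.sum_mul_sq_le_sq_mul_sq _ _ _

lemma key_numeric (a t k2 s2 : ℝ) (ha : 0 ≤ a) (hk2 : 0 ≤ k2) (hs2 : 0 ≤ s2)
    (hta : t ≤ a) (hcs : t ^ 2 ≤ k2 * s2) :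
    a ≤ (1 / (2 * (Real.sqrt 2 - 1))) * (2 * a + 2 * k2 - 4 * t + s2) := by
  have hr : Real.sqrt 2 ^ 2 = 2 := Real.sq_sqrt (by norm_num)
  have hrn : 0 ≤ Real.sqrt 2 := Real.sqrt_nonneg 2
  have hr1 : 1 < Real.sqrt 2 := by nlinarith
  have hr2 : Real.sqrt 2 < 2 := by nlinarith
  set r := Real.sqrt 2
  have h2rt : 2 * r * t ≤ 2 * k2 + s2 := by
    rcases le_or_gt t 0 with h | h
    · nlinarith
    · nlinarith [sq_nonneg (2 * k2 - s2)]
  rw [one_div, inv_mul_eq_div, le_div_iff₀ (by nlinarith)]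
  nlinarith [mul_nonneg (show (0:ℝ) ≤ 4 - 2 * r by nlinarith) (sub_nonneg.2 hta)]

/-- Factor-space vs matrix-space distance comparison (Lemma: `UᵀY = YᵀU` PSD case). -/
theorem factor_distance_bound {n r : ℕ} (hn : 0 < n) (hr : 0 < r)
    (U Y : Matrix (Fin n) (Fin r) ℝ)
    (hsym : Uᵀ * Y = Yᵀ * U) (hpsd : (Uᵀ * Y).PosSemidef) :
    frob ((U - Y) * Uᵀ) ^ 2 ≤
      (1 / (2 * (Real.sqrt 2 - 1))) * frob (U * Uᵀ - Y * Yᵀ) ^ 2 := by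
  set D := U - Y with hD
  set K := Uᵀ * D with hK
  set S := Dᵀ * D with hS
  have hKsymm : Kᵀ = K := by
    rw [hK, Matrix.transpose_mul, Matrix.transpose_transpose, hD, Matrix.transpose_sub,
      Matrix.sub_mul, Matrix.mul_sub, hsym]
  have hSsymm : Sᵀ = S := by
    rw [hS, Matrix.transpose_mul, Matrix.transpose_transpose]
  have hDU : Dᵀ * U = K := by
    rw [← hKsymm, hK, Matrix.transpose_mul, Matrix.transpose_transpose]
  have hM : U * Uᵀ - Y * Yᵀ = D * Uᵀ + U * Dᵀ - D * Dᵀ := by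
    rw [hD]
    simp only [Matrix.transpose_sub, Matrix.sub_mul, Matrix.mul_sub]
    abel
  rw [frob_sq_eq, frob_sq_eq]
  simp only [Matrix.transpose_sub, Matrix.transpose_mul, Matrix.transpose_transpose]
  -- trace identities
  have e2 : ((D * Uᵀ) * (D * Uᵀ)).trace = (K * K).trace := by rw [tcyc, ← hK]
  have e3 : ((U * Dᵀ) * (U * Dᵀ)).trace = (K * K).trace := by rw [tcyc, hDU]
  have e4 : ((D * Uᵀ) * (D * Dᵀ)).trace = (K * S).trace := by rw [tcyc, ← hK, ← hS]
  have e5 : ((U * Dᵀ) * (D * Dᵀ)).trace = (K * S).trace := by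
    rw [tcyc, hDU, ← hS, Matrix.trace_mul_comm]
  have e6 : ((D * Dᵀ) * (D * Uᵀ)).trace = (K * S).trace := by
    rw [Matrix.trace_mul_comm]; exact e4
  have e7 : ((D * Dᵀ) * (U * Dᵀ)).trace = (K * S).trace := by
    rw [Matrix.trace_mul_comm]; exact e5
  have e8 : ((D * Dᵀ) * (D * Dᵀ)).trace = (S * S).trace := by rw [tcyc, ← hS]
  have e1 : ((D * Uᵀ) * (U * Dᵀ)).trace = ((U * Dᵀ) * (D * Uᵀ)).trace :=
    Matrix.trace_mul_comm _ _
  have F1 : ((D * Uᵀ + U * Dᵀ - D * Dᵀ) * (D * Uᵀ + U * Dᵀ - D * Dᵀ)).trace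
      = 2 * ((U * Dᵀ) * (D * Uᵀ)).trace + 2 * (Kᵀ * K).trace - 4 * (K * S).trace
        + (Sᵀ * S).trace := by
    rw [hKsymm, hSsymm]
    simp only [Matrix.add_mul, Matrix.mul_add, Matrix.sub_mul, Matrix.mul_sub,
      Matrix.trace_add, Matrix.trace_sub]
    rw [e1, e2, e3, e4, e5, e6, e7, e8]
    ring
  -- t ≤ a
  have ea : ((U * Dᵀ) * (D * Uᵀ)).trace = ((Uᵀ * Y) * S).trace + (K * S).trace := by
    have hUU : Uᵀ * Y + K = Uᵀ * U := by rw [hK, hD, Matrix.mul_sub]; abel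
    rw [tcyc, ← hS, Matrix.trace_mul_comm, ← hUU, Matrix.add_mul, Matrix.trace_add]
  have hPS : 0 ≤ ((Uᵀ * Y) * S).trace := by
    have hpsd2 : (D * (Uᵀ * Y) * Dᵀ).PosSemidef := by
      have := hpsd.mul_mul_conjTranspose_same D
      rwa [Matrix.conjTranspose_eq_transpose_of_trivial] at this
    have htr : (D * (Uᵀ * Y) * Dᵀ).trace = ((Uᵀ * Y) * S).trace := by
      rw [Matrix.trace_mul_cycle D (Uᵀ * Y) Dᵀ, Matrix.trace_mul_comm, hS, Matrix.mul_assoc]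
    rw [← htr]
    exact psd_trace_nonneg hpsd2
  have hta : (K * S).trace ≤ ((U * Dᵀ) * (D * Uᵀ)).trace := by rw [ea]; linarith
  -- nonnegativity
  have hann : 0 ≤ ((U * Dᵀ) * (D * Uᵀ)).trace := by
    have := trace_tr_mul_self_nonneg (D * Uᵀ)
    simpa [Matrix.transpose_mul] using this
  rw [hM, F1]
  exact key_numeric _ _ _ _ hann (trace_tr_mul_self_nonneg K) (trace_tr_mul_self_nonneg S)
    hta (trace_cs K S hKsymm)
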